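/- Let (X, d) be a compact metric space and μ a finite Borel measure on X such that A·rⁿ ≤ μ(closedBall(x, r)) for every x ∈ X and every r ∈ (0, 1], where A > 0 and n ≥ 1 is an integer. Let s ∈ (0, 1/100) and let (Σ_i)_{i ∈ ℕ} be an arbitrary sequence of subsets of X. Then there exist finite subsets A_i ⊆ Σ_i, i ∈ ℕ, such that: (1) for all i, k ∈ ℕ and all distinct points p ∈ A_i, q ∈ A_k one has d(p, q) > max(s^i, s^k); and (2) for every k ∈ ℕ, ⋃_{i ≤ k} Σ_i ⊆ ⋃_{i ≤ k} ⋃_{p ∈ A_i} closedBall(p, s^i). -/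

import Mathlib

open Metric MeasureTheory

/-- In a compact metric space, any `r`-separated set is finite. -/
lemma separated_finite {X : Type*} [MetricSpace X] [CompactSpace X]
    (M : Set X) (r : ℝ) (hr : 0 < r)
    (hsep : ∀ p ∈ M, ∀ q ∈ M, p ≠ q → r < dist p q) : M.Finite := by
  have htb : TotallyBounded (Set.univ : Set X) := isCompact_univ.totallyBounded
  obtain ⟨t, ht, hcov⟩ := (totallyBounded_iff.mp htb) (r / 2) (by linarith)
  have hsub : M ⊆ ⋃ y ∈ t, (M ∩ ball y (r / 2)) := by
    intro x hx
    have h2 := hcov (Set.mem_univ x)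
    simp only [Set.mem_iUnion] at h2 ⊢
    obtain ⟨y, hy, hxy⟩ := h2
    exact ⟨y, hy, hx, hxy⟩
  refine Set.Finite.subset (Set.Finite.biUnion ht fun y _ => ?_) hsub
  refine Set.Subsingleton.finite fun a ha b hb => ?_
  by_contra hab
  have h3 := hsep a ha.1 b hb.1 hab
  have h4 := dist_triangle a y b
  rw [dist_comm y b] at h4
  have h1 := mem_ball.mp ha.2
  have h2 := mem_ball.mp hb.2
  linarith

/-- Existence of a maximal `r`-separated finite subset of `T`. -/
lemma exists_maximal_separated {X : Type*} [MetricSpace X] [CompactSpace X]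
    (T : Set X) (r : ℝ) (hr : 0 < r) :
    ∃ B : Finset X, ↑B ⊆ T ∧ (∀ p ∈ B, ∀ q ∈ B, p ≠ q → r < dist p q) ∧
      ∀ x ∈ T, ∃ b ∈ B, dist x b ≤ r := by
  obtain ⟨M, hMmem, hMmax⟩ := zorn_subset
      {C : Set X | C ⊆ T ∧ ∀ p ∈ C, ∀ q ∈ C, p ≠ q → r < dist p q} (by
    intro c hc hchain
    refine ⟨⋃₀ c, ⟨?_, ?_⟩, fun C hC => Set.subset_sUnion_of_mem hC⟩
    · exact Set.sUnion_subset fun C hC => (hc hC).1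
    · intro p hp q hq hpq
      obtain ⟨C1, hC1, hp1⟩ := hp
      obtain ⟨C2, hC2, hq2⟩ := hq
      rcases hchain.total hC1 hC2 with h | h
      · exact (hc hC2).2 p (h hp1) q hq2 hpq
      · exact (hc hC1).2 p hp1 q (h hq2) hpq)
  obtain ⟨hMT, hMsep⟩ := hMmem
  have hfin : M.Finite := separated_finite M r hr hMsep
  refine ⟨hfin.toFinset, by simpa using hMT, by simpa using hMsep, ?_⟩
  intro x hx
  by_contra hcon
  push_neg at hcon
  simp only [Set.Finite.mem_toFinset] at hcon
  have hxM : x ∉ M := by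
    intro h
    have h0 := hcon x h
    simp only [dist_self] at h0
    linarith
  have hins : insert x M ∈
      {C : Set X | C ⊆ T ∧ ∀ p ∈ C, ∀ q ∈ C, p ≠ q → r < dist p q} := by
    refine ⟨Set.insert_subset hx hMT, ?_⟩
    intro p hp q hq hpq
    rcases hp with rfl | hp
    · rcases hq with rfl | hq
      · exact absurd rfl hpq
      · exact hcon q hq
    · rcases hq with rfl | hq
      · rw [dist_comm]; exact hcon p hp
      · exact hMsep p hp q hq hpq
  have hle := hMmax hins (Set.subset_insert x M)
  exact hxM (hle (Set.mem_insert x M))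

/-- Greedy layer-by-layer choice of maximal separated sets. -/
noncomputable def pickFam {X : Type*} [MetricSpace X] [CompactSpace X]
    (s : ℝ) (hs0 : 0 < s) (Sig : ℕ → Set X) : ℕ → Finset X :=
  fun k => Nat.strongRec (motive := fun _ => Finset X) (fun k prev =>
    (exists_maximal_separated
      {p ∈ Sig k | ∀ i, ∀ h : i < k, ∀ q ∈ prev i h, s ^ i < dist p q}
      (s ^ k) (pow_pos hs0 k)).choose) k

lemma pickFam_eq {X : Type*} [MetricSpace X] [CompactSpace X]
    (s : ℝ) (hs0 : 0 < s) (Sig : ℕ → Set X) (k : ℕ) :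
    pickFam s hs0 Sig k = (exists_maximal_separated
      {p ∈ Sig k | ∀ i, i < k → ∀ q ∈ pickFam s hs0 Sig i, s ^ i < dist p q}
      (s ^ k) (pow_pos hs0 k)).choose := by
  rw [pickFam, Nat.strongRec_eq]
  rfl

/-- First half of Proposition 3.5 (Self-Similar Covers): in a compact metric space with a
finite Borel measure satisfying the lower Ahlfors bound `A·rⁿ ≤ μ(closedBall(x,r))` for
`r ∈ (0,1]`, given `s ∈ (0,1/100)` and subsets `Σᵢ`, one can select finite subsets
`Aᵢ ⊆ Σᵢ` whose points are mutually `max(sⁱ, sᵏ)`-separated and whose closed `sⁱ`-balls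
cover `⋃_{i ≤ k} Σᵢ` layer by layer. -/
theorem self_similar_cover_exists {X : Type*} [MetricSpace X] [CompactSpace X]
    [MeasurableSpace X] [BorelSpace X] (μ : Measure X) [IsFiniteMeasure μ]
    (n : ℕ) (hn : 1 ≤ n) (A : ℝ) (hA : 0 < A)
    (hreg : ∀ (x : X) (r : ℝ), 0 < r → r ≤ 1 →
      ENNReal.ofReal (A * r ^ n) ≤ μ (closedBall x r))
    (s : ℝ) (hs0 : 0 < s) (hs : s < 1 / 100) (Sig : ℕ → Set X) :
    ∃ Afam : ℕ → Finset X,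
      (∀ i, ↑(Afam i) ⊆ Sig i) ∧
      (∀ i k : ℕ, ∀ p ∈ Afam i, ∀ q ∈ Afam k, p ≠ q → max (s ^ i) (s ^ k) < dist p q) ∧
      (∀ k : ℕ, (⋃ i ≤ k, Sig i) ⊆ ⋃ i ≤ k, ⋃ p ∈ Afam i, closedBall p (s ^ i)) := by
  set Afam := pickFam s hs0 Sig with hAf
  have spec : ∀ k, (↑(Afam k) ⊆
        {p ∈ Sig k | ∀ i, i < k → ∀ q ∈ Afam i, s ^ i < dist p q}) ∧
      (∀ p ∈ Afam k, ∀ q ∈ Afam k, p ≠ q → s ^ k < dist p q) ∧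
      (∀ x ∈ {p ∈ Sig k | ∀ i, i < k → ∀ q ∈ Afam i, s ^ i < dist p q},
        ∃ b ∈ Afam k, dist x b ≤ s ^ k) := by
    intro k
    have := (exists_maximal_separated
      {p ∈ Sig k | ∀ i, i < k → ∀ q ∈ pickFam s hs0 Sig i, s ^ i < dist p q}
      (s ^ k) (pow_pos hs0 k)).choose_spec
    rw [hAf, pickFam_eq s hs0 Sig k]
    exact this
  have hpow : ∀ i k : ℕ, i ≤ k → s ^ k ≤ s ^ i :=
    fun i k h => pow_le_pow_of_le_one hs0.le (by linarith) h
  -- separation, ordered version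
  have hsep : ∀ i k : ℕ, i ≤ k → ∀ p ∈ Afam i, ∀ q ∈ Afam k, p ≠ q →
      s ^ i < dist p q := by
    intro i k hik p hp q hq hpq
    rcases lt_or_eq_of_le hik with h | rfl
    · have := ((spec k).1 hq).2 i h p hp
      rwa [dist_comm] at this
    · exact (spec i).2.1 p hp q hq hpq
  refine ⟨Afam, fun i => fun p hp => ((spec i).1 hp).1, ?_, ?_⟩
  · intro i k p hp q hq hpq
    rcases le_total i k with h | h
    · rw [max_eq_left (hpow i k h)]
      exact hsep i k h p hp q hq hpq
    · rw [max_eq_right (hpow k i h), dist_comm]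
      exact hsep k i h q hq p hp hpq.symm
  · intro k x hx
    simp only [Set.mem_iUnion] at hx ⊢
    obtain ⟨i, hik, hxi⟩ := hx
    by_cases hT : ∀ j, j < i → ∀ q ∈ Afam j, s ^ j < dist x q
    · obtain ⟨b, hb, hdb⟩ := (spec i).2.2 x ⟨hxi, hT⟩
      exact ⟨i, hik, b, hb, mem_closedBall.mpr hdb⟩
    · push_neg at hT
      obtain ⟨j, hji, q, hq, hdq⟩ := hT
      exact ⟨j, le_trans hji.le hik, q, hq, mem_closedBall.mpr hdq⟩
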